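/- Let k ≥ 1 and let t_1 < t_2 < ⋯ < t_k be natural numbers. Then D = V(2^0,2^1,…,2^{k−1}) divides V(2^{t_1},…,2^{t_k}) in F₂[x_1,…,x_k]. -/

import Mathlib

open MvPolynomial

/-- `Vdm k t` is the determinant of the `k × k` matrix whose `(i, j)` entry is `xᵢ ^ t j`,
in `F₂[x₁, …, x_k]`. -/
noncomputable def Vdm (k : ℕ) (t : Fin k → ℕ) : MvPolynomial (Fin k) (ZMod 2) :=
  Matrix.det (Matrix.of fun i j : Fin k => (X i : MvPolynomial (Fin k) (ZMod 2)) ^ t j)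

/-- `D k = V(2^0, 2^1, …, 2^(k-1))`. -/
noncomputable def D (k : ℕ) : MvPolynomial (Fin k) (ZMod 2) :=
  Vdm k fun j => 2 ^ (j : ℕ)

/-- `N k ℓ j` is the Vandermonde determinant whose exponent tuple lists the 2-powers
`2^0, …, 2^(k-1)` with `2^j` omitted, followed by `2^ℓ`. -/
noncomputable def N (k ℓ j : ℕ) : MvPolynomial (Fin k) (ZMod 2) :=
  Vdm k fun i =>
    if (i : ℕ) + 1 < k then (if (i : ℕ) < j then 2 ^ (i : ℕ) else 2 ^ ((i : ℕ) + 1))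
    else 2 ^ ℓ

/- `G k m` is the sum of all monomials of total degree `m` in `x₁, …, x_k` in which
every nonzero exponent is a power of 2. -/
open Classical in
noncomputable def G (k m : ℕ) : MvPolynomial (Fin k) (ZMod 2) :=
  ∑ d : Fin k → Fin (m + 1),
    if (∑ i, (d i : ℕ)) = m ∧ ∀ i, (d i : ℕ) ≠ 0 → ∃ e, (d i : ℕ) = 2 ^ e then
      ∏ i, (X i : MvPolynomial (Fin k) (ZMod 2)) ^ (d i : ℕ)
    else 0

namespace Stmt2Aux

lemma zmod2_ne_zero (a : ZMod 2) (h : a ≠ 0) : a = 1 := by revert h; revert a; decide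

lemma zmod2_pow_pow (a : ZMod 2) (e : ℕ) : a ^ 2 ^ e = a := by
  induction e with
  | zero => simp
  | succ e ih => rw [pow_succ, pow_mul, ZMod.pow_card, ih]

lemma eq_one_of_isUnit : ∀ {k : ℕ} (p : MvPolynomial (Fin k) (ZMod 2)), IsUnit p → p = 1 := by
  intro k
  induction k with
  | zero =>
    intro p hp
    set e := MvPolynomial.isEmptyRingEquiv (ZMod 2) (Fin 0) with he
    have h1 : e p = 1 := zmod2_ne_zero _ (hp.map e).ne_zero
    have := congrArg e.symm h1
    rwa [e.symm_apply_apply, map_one] at this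
  | succ n ih =>
    intro p hp
    set e := MvPolynomial.finSuccEquiv (ZMod 2) n with he
    obtain ⟨r, hr, hCr⟩ := Polynomial.isUnit_iff.mp (hp.map e)
    rw [ih r hr, map_one] at hCr
    have := congrArg e.symm hCr
    rw [e.symm_apply_apply, map_one] at this
    exact this.symm

instance (k : ℕ) : Subsingleton (MvPolynomial (Fin k) (ZMod 2))ˣ :=
  ⟨fun u v => Units.ext (by
    rw [eq_one_of_isUnit _ u.isUnit, eq_one_of_isUnit _ v.isUnit])⟩

lemma prime_X {k : ℕ} (i : Fin k) : Prime (X i : MvPolynomial (Fin k) (ZMod 2)) := by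
  have hk := i.pos
  obtain ⟨n, rfl⟩ : ∃ n, k = n + 1 := ⟨k - 1, by omega⟩
  have h0 : Prime (X 0 : MvPolynomial (Fin (n + 1)) (ZMod 2)) := by
    rw [← MulEquiv.prime_iff (MvPolynomial.finSuccEquiv (ZMod 2) n).toRingEquiv.toMulEquiv (p := X 0)]
    have : (MvPolynomial.finSuccEquiv (ZMod 2) n).toRingEquiv.toMulEquiv (X 0)
        = (Polynomial.X : Polynomial (MvPolynomial (Fin n) (ZMod 2))) :=
      MvPolynomial.finSuccEquiv_X_zero
    rw [this]
    exact Polynomial.prime_X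
  have hE : (renameEquiv (ZMod 2) (Equiv.swap (0 : Fin (n+1)) i)).toRingEquiv.toMulEquiv (X 0)
      = (X i : MvPolynomial (Fin (n + 1)) (ZMod 2)) := by
    simp [renameEquiv, Equiv.swap_apply_left]
  rw [← hE]
  exact (MulEquiv.prime_iff (renameEquiv (ZMod 2) (Equiv.swap (0 : Fin (n+1)) i)).toRingEquiv.toMulEquiv).mpr h0

/-- The linear form `∑ cᵢ xᵢ`. -/
noncomputable def myL {k : ℕ} (c : Fin k → ZMod 2) : MvPolynomial (Fin k) (ZMod 2) :=
  ∑ i, C (c i) * X i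

lemma myL_hom {k : ℕ} (c : Fin k → ZMod 2) : (myL c).IsHomogeneous 1 :=
  IsHomogeneous.sum _ _ _ fun i _ => isHomogeneous_C_mul_X _ _

lemma myL_inj {k : ℕ} : Function.Injective (myL (k := k)) := by
  intro a b hab
  funext i
  have h := congrArg (coeff (Finsupp.single i 1)) hab
  simpa [myL, coeff_sum, coeff_C_mul, coeff_X', Finsupp.single_left_inj (one_ne_zero (α := ℕ)),
    Finset.sum_ite_eq'] using h

lemma myL_pow {k : ℕ} (c : Fin k → ZMod 2) (e : ℕ) :
    (myL c) ^ 2 ^ e = ∑ i, C (c i) * (X i : MvPolynomial (Fin k) (ZMod 2)) ^ 2 ^ e := by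
  induction e with
  | zero => simp [myL]
  | succ e ih =>
    have h2 : (2 : ℕ) ^ (e + 1) = 2 ^ e * 2 := by ring
    rw [h2, pow_mul, ih, sum_pow_char]
    congr 1
    funext i
    rw [mul_pow, ← map_pow, ZMod.pow_card, ← pow_mul]

end Stmt2Aux

namespace Stmt2Aux

lemma prime_myL {k : ℕ} (c : Fin k → ZMod 2) (hc : c ≠ 0) : Prime (myL c) := by
  obtain ⟨i₀, hi₀⟩ : ∃ i, c i ≠ 0 := by
    by_contra h; push_neg at h; exact hc (funext h)
  have hc1 : c i₀ = 1 := zmod2_ne_zero _ hi₀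
  classical
  set u : Fin k → MvPolynomial (Fin k) (ZMod 2) :=
    fun j => if j = i₀ then myL c else X j with hu
  set f : MvPolynomial (Fin k) (ZMod 2) →ₐ[ZMod 2] MvPolynomial (Fin k) (ZMod 2) := aeval u with hf
  have hfL : f (myL c) = X i₀ := by
    have expand : f (myL c) = ∑ i, C (c i) * u i := by
      simp [myL, hf, map_sum, algebraMap_eq]
    have hsplit : ∀ v : Fin k → MvPolynomial (Fin k) (ZMod 2),
        (∑ i, C (c i) * v i) = C (c i₀) * v i₀ + ∑ i ∈ Finset.univ.erase i₀, C (c i) * v i :=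
      fun v => (Finset.add_sum_erase _ _ (Finset.mem_univ i₀)).symm
    have herase : ∀ i ∈ Finset.univ.erase i₀, C (c i) * u i = C (c i) * X i := by
      intro i hi
      rw [hu]
      simp [Finset.mem_erase.mp hi |>.1]
    rw [expand, hsplit u, Finset.sum_congr rfl herase]
    have hui₀ : u i₀ = myL c := by rw [hu]; simp
    have hLsplit : myL c = X i₀ + ∑ i ∈ Finset.univ.erase i₀, C (c i) * X i := by
      unfold myL
      rw [hsplit X, hc1, map_one, one_mul]
    rw [hui₀, hc1, map_one, one_mul, hLsplit, add_assoc]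
    simp [CharTwo.add_self_eq_zero]
  have hff : f.comp f = AlgHom.id (ZMod 2) (MvPolynomial (Fin k) (ZMod 2)) := by
    apply MvPolynomial.algHom_ext
    intro j
    by_cases hj : j = i₀
    · subst hj
      have h1 : f (X j) = myL c := by rw [hf]; simp [hu]
      simp only [AlgHom.comp_apply, AlgHom.id_apply, h1, hfL]
    · have h1 : f (X j) = X j := by rw [hf]; simp [hu, hj]
      simp only [AlgHom.comp_apply, AlgHom.id_apply, h1]
  set E : MvPolynomial (Fin k) (ZMod 2) ≃ₐ[ZMod 2] MvPolynomial (Fin k) (ZMod 2) :=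
    AlgEquiv.ofAlgHom f f hff hff with hE
  have hEX : E.toRingEquiv.toMulEquiv (X i₀) = myL c := by
    show f (X i₀) = myL c
    rw [hf]; simp [hu]
  rw [← hEX]
  exact (MulEquiv.prime_iff E.toRingEquiv.toMulEquiv).mpr (prime_X i₀)

lemma myL_dvd_vdm {k : ℕ} (t : Fin k → ℕ) (c : Fin k → ZMod 2) (hc : c ≠ 0) :
    myL c ∣ Vdm k (fun j => 2 ^ t j) := by
  obtain ⟨i₀, hi₀⟩ : ∃ i, c i ≠ 0 := by
    by_contra h; push_neg at h; exact hc (funext h)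
  have hc1 : c i₀ = 1 := zmod2_ne_zero _ hi₀
  set M : Matrix (Fin k) (Fin k) (MvPolynomial (Fin k) (ZMod 2)) :=
    Matrix.of fun i j => (X i : MvPolynomial (Fin k) (ZMod 2)) ^ 2 ^ t j with hM
  have h1 : Vdm k (fun j => 2 ^ t j)
      = (M.updateRow i₀ (∑ i, (C (c i) : MvPolynomial (Fin k) (ZMod 2)) • M i)).det := by
    rw [Matrix.det_updateRow_sum]
    have hone : (C (c i₀) : MvPolynomial (Fin k) (ZMod 2)) = 1 := by rw [hc1, map_one]
    rw [hone, one_smul]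
    rfl
  have h2 : (∑ i, (C (c i) : MvPolynomial (Fin k) (ZMod 2)) • M i)
      = fun j => (myL c) ^ 2 ^ t j := by
    funext j
    rw [myL_pow]
    simp [hM, Finset.sum_apply, smul_eq_C_mul]
  have h3 : (fun j => (myL c) ^ 2 ^ t j)
      = myL c • (fun j => (myL c) ^ (2 ^ t j - 1)) := by
    funext j
    have : 2 ^ t j = 1 + (2 ^ t j - 1) := by
      have := Nat.one_le_two_pow (n := t j); omega
    simp only [Pi.smul_apply, smul_eq_mul]
    conv_lhs => rw [this]
    rw [pow_add, pow_one]
  rw [h1, h2, h3, Matrix.det_updateRow_smul]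
  exact Dvd.intro _ rfl

open Classical in
/-- The product of all nonzero linear forms. -/
noncomputable def myP (k : ℕ) : MvPolynomial (Fin k) (ZMod 2) :=
  ∏ c ∈ Finset.univ.filter (fun c : Fin k → ZMod 2 => c ≠ 0), myL c

open Classical in
lemma myP_dvd {k : ℕ} (t : Fin k → ℕ) : myP k ∣ Vdm k fun j => 2 ^ t j := by
  have key := Finset.prod_primes_dvd
    (s := (Finset.univ.filter (fun c : Fin k → ZMod 2 => c ≠ 0)).image myL)
    (Vdm k fun j => 2 ^ t j)
    (fun p hp => by
      obtain ⟨c, hcmem, rfl⟩ := Finset.mem_image.mp hp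
      exact prime_myL c (Finset.mem_filter.mp hcmem).2)
    (fun p hp => by
      obtain ⟨c, hcmem, rfl⟩ := Finset.mem_image.mp hp
      exact myL_dvd_vdm t c (Finset.mem_filter.mp hcmem).2)
  rwa [Finset.prod_image (fun a _ b _ h => myL_inj h)] at key

open Classical in
lemma card_nonzero (k : ℕ) :
    (Finset.univ.filter (fun c : Fin k → ZMod 2 => c ≠ 0)).card = 2 ^ k - 1 := by
  rw [Finset.filter_ne', Finset.card_erase_of_mem (Finset.mem_univ 0), Finset.card_univ]
  simp [ZMod.card]

open Classical in
lemma myP_hom (k : ℕ) : (myP k).IsHomogeneous (2 ^ k - 1) := by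
  have h := IsHomogeneous.prod (Finset.univ.filter (fun c : Fin k → ZMod 2 => c ≠ 0))
    (fun c => myL c) (fun _ => 1) (fun c _ => myL_hom c)
  simpa [Finset.sum_const, card_nonzero, mul_one, myP] using h

lemma sum_two_pow (k : ℕ) : ∑ i : Fin k, 2 ^ (i : ℕ) = 2 ^ k - 1 := by
  induction k with
  | zero => simp
  | succ n ih =>
    rw [Fin.sum_univ_castSucc]
    simp only [Fin.coe_castSucc, Fin.val_last, ih]
    have : 1 ≤ 2 ^ n := Nat.one_le_two_pow
    rw [pow_succ]
    omega

lemma hsign {k : ℕ} (σ : Equiv.Perm (Fin k)) :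
    (((Equiv.Perm.sign σ : ℤˣ) : ℤ) : MvPolynomial (Fin k) (ZMod 2)) = 1 := by
  rcases Int.units_eq_one_or (Equiv.Perm.sign σ) with h | h <;> rw [h] <;>
    simp [CharTwo.neg_eq]

lemma D_hom (k : ℕ) : (D k).IsHomogeneous (2 ^ k - 1) := by
  rw [D, Vdm, Matrix.det_apply']
  apply IsHomogeneous.sum
  intro σ _
  rw [hsign σ, one_mul]
  have h := IsHomogeneous.prod Finset.univ
    (fun i : Fin k => (X (σ i) : MvPolynomial (Fin k) (ZMod 2)) ^ 2 ^ (i : ℕ))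
    (fun i : Fin k => 2 ^ (i : ℕ)) (fun i _ => isHomogeneous_X_pow _ _)
  rw [sum_two_pow] at h
  simpa using h

lemma prod_monomial {k : ℕ} (s : Finset (Fin k)) (f : Fin k → (Fin k →₀ ℕ)) :
    (∏ i ∈ s, monomial (f i) (1 : ZMod 2)) = monomial (∑ i ∈ s, f i) 1 := by
  classical
  induction s using Finset.induction with
  | empty => simp
  | insert _ _ h ih =>
    rw [Finset.prod_insert h, Finset.sum_insert h, ih, monomial_mul, one_mul]

lemma D_expand (k : ℕ) : D k = ∑ σ : Equiv.Perm (Fin k),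
    monomial (∑ i : Fin k, Finsupp.single (σ i) (2 ^ (i : ℕ))) (1 : ZMod 2) := by
  rw [D, Vdm, Matrix.det_apply']
  refine Finset.sum_congr rfl fun σ _ => ?_
  rw [hsign σ, one_mul, ← prod_monomial]
  refine Finset.prod_congr rfl fun i _ => ?_
  rw [Matrix.of_apply, X_pow_eq_monomial]

lemma sum_single_apply {k : ℕ} (σ : Equiv.Perm (Fin k)) (j : Fin k) :
    ((∑ i : Fin k, Finsupp.single (σ i) (2 ^ (i : ℕ))) : Fin k →₀ ℕ) (σ j) = 2 ^ (j : ℕ) := by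
  rw [Finsupp.finset_sum_apply]
  rw [Finset.sum_eq_single j]
  · simp
  · intro i _ hij
    rw [Finsupp.single_apply, if_neg (fun h => hij (σ.injective h))]
  · simp

lemma coeff_D (k : ℕ) :
    coeff (∑ i : Fin k, Finsupp.single i (2 ^ (i : ℕ))) (D k) = 1 := by
  rw [D_expand, coeff_sum]
  rw [Finset.sum_eq_single (1 : Equiv.Perm (Fin k))]
  · simp [coeff_monomial]
  · intro σ _ hσ
    rw [coeff_monomial, if_neg]
    intro heq
    apply hσ
    refine Equiv.ext fun j => ?_
    have h1 := sum_single_apply σ j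
    have h2 : ((∑ i : Fin k, Finsupp.single i (2 ^ (i : ℕ))) : Fin k →₀ ℕ) (σ j)
        = 2 ^ ((σ j : Fin k) : ℕ) := by
      have := sum_single_apply (1 : Equiv.Perm (Fin k)) (σ j)
      simpa using this
    rw [heq, h2] at h1
    have : ((σ j : Fin k) : ℕ) = (j : ℕ) := Nat.pow_right_injective le_rfl h1
    simp [Fin.ext_iff, this]
  · simp

lemma D_ne_zero (k : ℕ) : D k ≠ 0 := by
  intro h
  have := coeff_D k
  rw [h, coeff_zero] at this
  exact one_ne_zero this.symm

lemma D_eq_myP (k : ℕ) : D k = myP k := by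
  obtain ⟨q, hq⟩ := myP_dvd (k := k) (fun j => (j : ℕ))
  have hq' : D k = myP k * q := hq
  set n := 2 ^ k - 1 with hn
  have hcomp : homogeneousComponent n (D k) = D k := by
    rw [homogeneousComponent_of_mem ((mem_homogeneousSubmodule _ _).mpr (D_hom k)), if_pos rfl]
  have hsum : q = ∑ m ∈ Finset.range (q.totalDegree + 1), homogeneousComponent m q :=
    (sum_homogeneousComponent q).symm
  have hD2 : D k = ∑ m ∈ Finset.range (q.totalDegree + 1),
      myP k * homogeneousComponent m q := by
    rw [hq', ← Finset.mul_sum, ← hsum]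
  have h3 : D k = myP k * homogeneousComponent 0 q := by
    calc D k = homogeneousComponent n (D k) := hcomp.symm
      _ = ∑ m ∈ Finset.range (q.totalDegree + 1),
          homogeneousComponent n (myP k * homogeneousComponent m q) := by
          rw [hD2, map_sum]
      _ = ∑ m ∈ Finset.range (q.totalDegree + 1),
          if n = n + m then myP k * homogeneousComponent m q else 0 := by
          refine Finset.sum_congr rfl fun m _ => ?_
          exact homogeneousComponent_of_mem ((mem_homogeneousSubmodule _ _).mpr
            ((myP_hom k).mul (homogeneousComponent_isHomogeneous m q)))
      _ = myP k * homogeneousComponent 0 q := by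
          rw [Finset.sum_eq_single 0]
          · simp
          · intro m _ hm
            rw [if_neg]
            omega
          · intro h0
            exact absurd (Finset.mem_range.mpr (Nat.succ_pos _)) h0
  rw [homogeneousComponent_zero] at h3
  have ha : coeff 0 q ≠ 0 := by
    intro h
    rw [h, map_zero, mul_zero] at h3
    exact D_ne_zero k h3
  rw [zmod2_ne_zero _ ha, map_one, mul_one] at h3
  exact h3

end Stmt2Aux

theorem stmt2 (k : ℕ) (hk : 1 ≤ k) (t : Fin k → ℕ) (ht : StrictMono t) :
    D k ∣ Vdm k (fun i => 2 ^ t i) := by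
  rw [Stmt2Aux.D_eq_myP k]
  exact Stmt2Aux.myP_dvd t
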